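/- Let α, β, γ be positive irrational numbers with α + β + γ = 1. Set u_m = {(m+1)α} and v_m = {(m+1)β}. Then for every positive integer m, B_α(m) + B_β(m) + B_γ(m) = m - δ(u_m, v_m), where δ(s,t) = 1 if s + t ≥ 1 and 0 otherwise. -/

import Mathlib

open scoped Classical

def beatty (α : ℝ) : Set ℤ := {m | ∃ n : ℕ, 0 < n ∧ m = ⌊(n : ℝ) / α⌋}

noncomputable def countLe (S : Set ℤ) (m : ℤ) : ℕ :=
  ((Finset.Icc 1 m).filter (fun k => k ∈ S)).card

lemma countLe_beatty_eq (α : ℝ) (hirr : Irrational α) (h0 : 0 < α) (h1 : α < 1) (m : ℕ) :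
    (countLe (beatty α) (m : ℤ) : ℤ) = ⌊((m : ℝ) + 1) * α⌋ := by
  set x : ℝ := ((m : ℝ) + 1) * α with hx
  have hxirr : Irrational x := by
    have : ((m : ℝ) + 1) = ((m + 1 : ℕ) : ℝ) := by push_cast; ring
    rw [hx, this]
    exact hirr.natCast_mul (by omega)
  have hFlt : ((⌊x⌋ : ℝ)) < x := lt_of_le_of_ne (Int.floor_le x) (fun h => hxirr.ne_int ⌊x⌋ h.symm)
  have hcard : ((Finset.Icc (1 : ℤ) (m : ℤ)).filter (fun k => k ∈ beatty α)).card
      = (Finset.Icc (1 : ℤ) ⌊x⌋).card := by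
    refine (Finset.card_bij (s := Finset.Icc (1 : ℤ) ⌊x⌋)
      (t := (Finset.Icc (1 : ℤ) (m : ℤ)).filter (fun k => k ∈ beatty α))
      (fun n _ => ⌊(n : ℝ) / α⌋) ?_ ?_ ?_).symm
    · intro n hn
      simp only [Finset.mem_Icc] at hn
      obtain ⟨hn1, hn2⟩ := hn
      have hn1R : (1 : ℝ) ≤ (n : ℝ) := by exact_mod_cast hn1
      have hnlt : (n : ℝ) < x := lt_of_le_of_lt (by exact_mod_cast hn2) hFlt
      show ⌊(n : ℝ) / α⌋ ∈ _
      rw [Finset.mem_filter, Finset.mem_Icc]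
      refine ⟨⟨?_, ?_⟩, ?_⟩
      · apply Int.le_floor.mpr
        rw [show ((1 : ℤ) : ℝ) = (1 : ℝ) from by norm_num, one_le_div h0]
        exact h1.le.trans hn1R
      · have : ⌊(n : ℝ) / α⌋ < (m : ℤ) + 1 := by
          apply Int.floor_lt.mpr
          rw [div_lt_iff₀ h0]
          push_cast
          calc (n : ℝ) < x := hnlt
            _ = ((m : ℝ) + 1) * α := hx
        omega
      · refine ⟨n.toNat, by omega, ?_⟩
        have hcast : ((n.toNat : ℕ) : ℝ) = (n : ℝ) := by
          exact_mod_cast Int.toNat_of_nonneg (show (0 : ℤ) ≤ n by omega)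
        rw [hcast]
    · intro a ha b hb hab
      simp only [Finset.mem_Icc] at ha hb
      have hab' : ⌊(a : ℝ) / α⌋ = ⌊(b : ℝ) / α⌋ := hab
      have hak1 : ((⌊(a : ℝ) / α⌋ : ℤ) : ℝ) * α ≤ a := by
        rw [← le_div_iff₀ h0]; exact Int.floor_le _
      have hak2 : (a : ℝ) < ((⌊(a : ℝ) / α⌋ : ℤ) + 1 : ℝ) * α := by
        rw [← div_lt_iff₀ h0]; exact Int.lt_floor_add_one _
      have hbk1 : ((⌊(a : ℝ) / α⌋ : ℤ) : ℝ) * α ≤ b := by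
        rw [← le_div_iff₀ h0, hab']; exact Int.floor_le _
      have hbk2 : (b : ℝ) < ((⌊(a : ℝ) / α⌋ : ℤ) + 1 : ℝ) * α := by
        rw [← div_lt_iff₀ h0, hab']; exact Int.lt_floor_add_one _
      have h1' : (a : ℝ) < b + 1 := by nlinarith
      have h2' : (b : ℝ) < a + 1 := by nlinarith
      have ha' : a < b + 1 := by exact_mod_cast h1'
      have hb' : b < a + 1 := by exact_mod_cast h2'
      omega
    · intro k hk
      rw [Finset.mem_filter, Finset.mem_Icc] at hk
      obtain ⟨⟨hk1, hk2⟩, n, hn0, hkn⟩ := hk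
      refine ⟨(n : ℤ), ?_, ?_⟩
      · rw [Finset.mem_Icc]
        constructor
        · exact_mod_cast hn0
        · apply Int.le_floor.mpr
          have hlt : (n : ℝ) / α < (k : ℝ) + 1 := by
            rw [hkn]; push_cast; exact Int.lt_floor_add_one _
          have : (n : ℝ) < ((k : ℝ) + 1) * α := by
            rw [← div_lt_iff₀ h0]; exact hlt
          have hk2R : (k : ℝ) + 1 ≤ (m : ℝ) + 1 := by
            have : (k : ℝ) ≤ (m : ℝ) := by exact_mod_cast hk2
            linarith
          have hbound : (n : ℝ) < x := by
            rw [hx]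
            calc (n : ℝ) < ((k : ℝ) + 1) * α := this
              _ ≤ ((m : ℝ) + 1) * α := by nlinarith
          push_cast
          exact hbound.le
      · exact hkn.symm
  have hF0 : (0 : ℤ) ≤ ⌊x⌋ := Int.floor_nonneg.mpr (by positivity)
  unfold countLe
  rw [hcard, Int.card_Icc]
  omega

theorem counting_identity (α β γ : ℝ)
    (hirra : Irrational α) (hirrb : Irrational β) (hirrc : Irrational γ)
    (ha : 0 < α) (hb : 0 < β) (hc : 0 < γ) (hsum : α + β + γ = 1)
    (m : ℕ) (hm : 0 < m) :
    (countLe (beatty α) (m : ℤ) : ℤ) + countLe (beatty β) (m : ℤ) + countLe (beatty γ) (m : ℤ) =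
      (m : ℤ) - (if 1 ≤ Int.fract (((m : ℝ) + 1) * α) + Int.fract (((m : ℝ) + 1) * β)
        then 1 else 0) := by
  have ha1 : α < 1 := by linarith
  have hb1 : β < 1 := by linarith
  have hc1 : γ < 1 := by linarith
  rw [countLe_beatty_eq α hirra ha ha1 m, countLe_beatty_eq β hirrb hb hb1 m,
    countLe_beatty_eq γ hirrc hc hc1 m]
  set x : ℝ := ((m : ℝ) + 1) * α with hx
  set y : ℝ := ((m : ℝ) + 1) * β with hy
  set z : ℝ := ((m : ℝ) + 1) * γ with hz
  have hzirr : Irrational z := by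
    have : ((m : ℝ) + 1) = ((m + 1 : ℕ) : ℝ) := by push_cast; ring
    rw [hz, this]
    exact hirrc.natCast_mul (by omega)
  have hxyz : x + y + z = (m : ℝ) + 1 := by
    rw [hx, hy, hz]; linear_combination ((m : ℝ) + 1) * hsum
  have hxy_eq : x + y = -z + (((m : ℤ) + 1 : ℤ) : ℝ) := by push_cast; linarith
  have hxy_irr : Irrational (x + y) := by
    have : x + y = (((m : ℤ) + 1 : ℤ) : ℝ) - z := by rw [hxy_eq]; ring
    rw [this]
    exact hzirr.intCast_sub _
  have hfxy_ne : Int.fract (x + y) ≠ 0 := by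
    intro h
    have : x + y = (⌊x + y⌋ : ℝ) := by
      have := Int.self_sub_floor (x + y)
      rw [h] at this; linarith
    exact hxy_irr.ne_int ⌊x + y⌋ this
  -- fract z = 1 - fract (x + y)
  have hfz : Int.fract z = 1 - Int.fract (x + y) := by
    have h1 : Int.fract (x + y) = Int.fract (-z) := by
      rw [hxy_eq, Int.fract_add_intCast]
    have h2 : Int.fract (-z) = 1 - Int.fract z := by
      apply Int.fract_neg
      intro h
      have : z = (⌊z⌋ : ℝ) := by
        have := Int.self_sub_floor z
        rw [h] at this; linarith
      exact hzirr.ne_int ⌊z⌋ this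
    rw [h1, h2]; ring
  -- fract (x+y) = fract (fract x + fract y)
  have hfadd : Int.fract (x + y) = Int.fract (Int.fract x + Int.fract y) := by
    have : x + y = (Int.fract x + Int.fract y) + ((⌊x⌋ + ⌊y⌋ : ℤ) : ℝ) := by
      have h1 := Int.self_sub_floor x
      have h2 := Int.self_sub_floor y
      push_cast
      linarith
    rw [this, Int.fract_add_intCast]
  have hfx0 := Int.fract_nonneg x
  have hfy0 := Int.fract_nonneg y
  have hfx1 := Int.fract_lt_one x
  have hfy1 := Int.fract_lt_one y
  have hflx := Int.self_sub_floor x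
  have hfly := Int.self_sub_floor y
  have hflz := Int.self_sub_floor z
  by_cases hcase : 1 ≤ Int.fract x + Int.fract y
  · rw [if_pos hcase]
    have hself : Int.fract (Int.fract x + Int.fract y) = Int.fract x + Int.fract y - 1 := by
      calc Int.fract (Int.fract x + Int.fract y)
          = Int.fract ((Int.fract x + Int.fract y - 1) + ((1 : ℤ) : ℝ)) := by
            congr 1; push_cast; ring
        _ = Int.fract (Int.fract x + Int.fract y - 1) := Int.fract_add_intCast _ _
        _ = Int.fract x + Int.fract y - 1 :=
            Int.fract_eq_self.mpr ⟨by linarith, by linarith⟩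
    have key : (⌊x⌋ : ℝ) + ⌊y⌋ + ⌊z⌋ = (m : ℝ) - 1 := by
      rw [hfadd, hself] at hfz
      linarith
    have : ((⌊x⌋ + ⌊y⌋ + ⌊z⌋ : ℤ) : ℝ) = (((m : ℤ) - 1 : ℤ) : ℝ) := by push_cast; linarith
    exact_mod_cast this
  · rw [if_neg hcase]
    push_neg at hcase
    have hself : Int.fract (Int.fract x + Int.fract y) = Int.fract x + Int.fract y :=
      Int.fract_eq_self.mpr ⟨by linarith, hcase⟩
    have key : (⌊x⌋ : ℝ) + ⌊y⌋ + ⌊z⌋ = (m : ℝ) := by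
      rw [hfadd, hself] at hfz
      linarith
    have : ((⌊x⌋ + ⌊y⌋ + ⌊z⌋ : ℤ) : ℝ) = (((m : ℤ) - 0 : ℤ) : ℝ) := by push_cast; linarith
    exact_mod_cast this
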